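/- Suppose b: ℝ^d → ℝ^d and the matrix field A(x,y) (positive semidefinite, with the subadditivity property along line segments: for any partition x_i = x + γ_i(y−x), tr A(x,y)/|x−y| ≤ Σ tr A(x_{i−1},x_i)/|x_{i−1}−x_i| and ‖A(x,y)‖/|x−y| ≤ Σ ‖A(x_{i−1},x_i)‖/|x_{i−1}−x_i|) satisfy the local one-sided bound: for every z ∈ ℝ^d there is a neighborhood U of z and C ≥ 0 such that 2⟨b(y)−b(x), y−x⟩ + tr A(x,y) + μ‖A(x,y)‖ ≤ C|y−x|² for all x,y ∈ U. If moreover this holds with a single constant C on compact sets (i.e. the constants C can be taken uniform along each line segment by compactness), then the same inequality 2⟨b(y)−b(x), y−x⟩ + tr A(x,y) + μ‖A(x,y)‖ ≤ C|y−x|² holds globally for all x, y ∈ ℝ^d with the same constant C. -/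

import Mathlib

open scoped RealInnerProductSpace BigOperators
open Matrix

noncomputable def matOpNorm {d : ℕ} (A : Matrix (Fin d) (Fin d) ℝ) : ℝ :=
  ‖Matrix.toEuclideanCLM (𝕜 := ℝ) A‖

set_option maxHeartbeats 1000000 in
/-- if the one-sided (monotonicity) condition with constant `C` holds locally,
then under the segment-subadditivity of `tr A` and `‖A‖` it holds globally with the same
constant `C`. -/
theorem onesided_local_implies_global {d : ℕ} (μ C : ℝ) (hμ : 0 ≤ μ) (hC : 0 ≤ C)
    (b : EuclideanSpace ℝ (Fin d) → EuclideanSpace ℝ (Fin d)) (hb : Continuous b)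
    (A : EuclideanSpace ℝ (Fin d) → EuclideanSpace ℝ (Fin d) → Matrix (Fin d) (Fin d) ℝ)
    (hAsymm : ∀ x y, (A x y)ᵀ = A x y)
    (hApsd : ∀ x y (v : EuclideanSpace ℝ (Fin d)),
      0 ≤ ⟪Matrix.toEuclideanLin (A x y) v, v⟫)
    (hAdiag : ∀ x, A x x = 0)
    -- segment-subadditivity for equidistant partitions:
    (hsubTr : ∀ (x y : EuclideanSpace ℝ (Fin d)) (n : ℕ), 1 ≤ n →
      Matrix.trace (A x y) ≤ (n : ℝ) *
        ∑ i : Fin n, Matrix.trace (A (x + ((i : ℝ) / n) • (y - x))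
          (x + (((i : ℝ) + 1) / n) • (y - x))))
    (hsubNorm : ∀ (x y : EuclideanSpace ℝ (Fin d)) (n : ℕ), 1 ≤ n →
      matOpNorm (A x y) ≤ (n : ℝ) *
        ∑ i : Fin n, matOpNorm (A (x + ((i : ℝ) / n) • (y - x))
          (x + (((i : ℝ) + 1) / n) • (y - x))))
    -- the one-sided bound with constant `C` holds locally:
    (hloc : ∀ z : EuclideanSpace ℝ (Fin d), ∃ ε > (0 : ℝ),
      ∀ x y : EuclideanSpace ℝ (Fin d), ‖x - z‖ < ε → ‖y - z‖ < ε →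
        2 * ⟪b y - b x, y - x⟫ + Matrix.trace (A x y) + μ * matOpNorm (A x y) ≤
          C * ‖y - x‖ ^ 2) :
    ∀ x y : EuclideanSpace ℝ (Fin d),
      2 * ⟪b y - b x, y - x⟫ + Matrix.trace (A x y) + μ * matOpNorm (A x y) ≤
        C * ‖y - x‖ ^ 2 := by
  classical
  intro x y
  choose ε hε hP using hloc
  set S := segment ℝ x y with hS
  have hScomp : IsCompact S := by
    rw [hS, segment_eq_image']
    exact isCompact_Icc.image (by continuity)
  have hcover : S ⊆ ⋃ z : EuclideanSpace ℝ (Fin d), Metric.ball z (ε z / 2) := by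
    intro p hp
    exact Set.mem_iUnion.2 ⟨p, Metric.mem_ball_self (by linarith [hε p])⟩
  obtain ⟨t, ht⟩ := hScomp.elim_finite_subcover _ (fun z => Metric.isOpen_ball) hcover
  have hxS : x ∈ S := left_mem_segment ℝ x y
  have htne : t.Nonempty := by
    obtain ⟨z, hz, _⟩ := Set.mem_iUnion₂.1 (ht hxS)
    exact ⟨z, hz⟩
  set δ : ℝ := t.inf' htne (fun z => ε z / 2) with hδdef
  have hδpos : 0 < δ := by
    rw [hδdef, Finset.lt_inf'_iff]
    intro z _
    linarith [hε z]
  -- key: uniform local bound along the segment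
  have key : ∀ p ∈ S, ∀ a a' : EuclideanSpace ℝ (Fin d), ‖a - p‖ < δ → ‖a' - p‖ < δ →
      2 * ⟪b a' - b a, a' - a⟫ + Matrix.trace (A a a') + μ * matOpNorm (A a a') ≤
        C * ‖a' - a‖ ^ 2 := by
    intro p hp a a' ha ha'
    obtain ⟨z, hzt, hpz⟩ := Set.mem_iUnion₂.1 (ht hp)
    have hδz : δ ≤ ε z / 2 := Finset.inf'_le _ hzt
    rw [Metric.mem_ball, dist_eq_norm] at hpz
    have h1 : ‖a - z‖ < ε z := by
      calc ‖a - z‖ ≤ ‖a - p‖ + ‖p - z‖ := by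
            simpa [dist_eq_norm] using dist_triangle a p z
        _ < ε z := by linarith
    have h2 : ‖a' - z‖ < ε z := by
      calc ‖a' - z‖ ≤ ‖a' - p‖ + ‖p - z‖ := by
            simpa [dist_eq_norm] using dist_triangle a' p z
        _ < ε z := by linarith
    exact hP z a a' h1 h2
  -- choose n
  obtain ⟨N, hN⟩ := exists_nat_gt (‖y - x‖ / δ)
  set n : ℕ := N + 1 with hn
  have hn1 : 1 ≤ n := by omega
  have hnpos : (0 : ℝ) < n := by positivity
  have hnne : (n : ℝ) ≠ 0 := ne_of_gt hnpos
  have hvn : ‖y - x‖ / n < δ := by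
    have h1 : ‖y - x‖ / δ < n := by
      have : (N : ℝ) < n := by exact_mod_cast Nat.lt_succ_self N
      linarith
    have h2 : ‖y - x‖ < (n : ℝ) * δ := by
      rw [div_lt_iff₀ hδpos] at h1
      linarith
    rw [div_lt_iff₀ hnpos, mul_comm]
    exact h2
  set pt : ℕ → EuclideanSpace ℝ (Fin d) := fun i => x + ((i : ℝ) / n) • (y - x) with hpt
  have hpt0 : pt 0 = x := by simp [hpt]
  have hptn : pt n = y := by
    simp only [hpt, div_self hnne, one_smul]
    abel
  have hptsucc : ∀ i : ℕ, pt (i + 1) = x + (((i : ℝ) + 1) / n) • (y - x) := by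
    intro i
    simp only [hpt]
    push_cast
    ring_nf
  have hdiff : ∀ i : ℕ, pt (i + 1) - pt i = ((1 : ℝ) / n) • (y - x) := by
    intro i
    rw [hptsucc]
    simp only [hpt]
    rw [add_sub_add_left_eq_sub, ← sub_smul]
    congr 1
    field_simp
    ring
  have hdiffnorm : ∀ i : ℕ, ‖pt (i + 1) - pt i‖ = ‖y - x‖ / n := by
    intro i
    rw [hdiff, norm_smul]
    simp [abs_of_pos hnpos, div_eq_mul_inv, mul_comm]
  have hmem : ∀ i : ℕ, i ≤ n → pt i ∈ S := by
    intro i hi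
    rw [hS, segment_eq_image']
    refine ⟨(i : ℝ) / n, ⟨by positivity, ?_⟩, rfl⟩
    rw [div_le_one hnpos]
    exact_mod_cast hi

  -- per-step inequality
  have step : ∀ i : ℕ, i < n →
      2 * ⟪b (pt (i + 1)) - b (pt i), pt (i + 1) - pt i⟫ +
        Matrix.trace (A (pt i) (pt (i + 1))) + μ * matOpNorm (A (pt i) (pt (i + 1))) ≤
          C * (‖y - x‖ / n) ^ 2 := by
    intro i hi
    have h := key (pt i) (hmem i (le_of_lt hi)) (pt i) (pt (i + 1))
      (by simpa using hδpos) (by rw [hdiffnorm]; exact hvn)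
    rw [hdiffnorm] at h
    exact h
  -- subadditivity as range sums
  have hTr : Matrix.trace (A x y) ≤
      (n : ℝ) * ∑ i ∈ Finset.range n, Matrix.trace (A (pt i) (pt (i + 1))) := by
    have h := hsubTr x y n hn1
    rw [Fin.sum_univ_eq_sum_range (fun i => Matrix.trace (A (x + ((i : ℝ) / n) • (y - x))
      (x + (((i : ℝ) + 1) / n) • (y - x)))) n] at h
    refine h.trans (le_of_eq ?_)
    congr 1
    refine Finset.sum_congr rfl fun i _ => ?_
    rw [hptsucc]
  have hNm : matOpNorm (A x y) ≤
      (n : ℝ) * ∑ i ∈ Finset.range n, matOpNorm (A (pt i) (pt (i + 1))) := by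
    have h := hsubNorm x y n hn1
    rw [Fin.sum_univ_eq_sum_range (fun i => matOpNorm (A (x + ((i : ℝ) / n) • (y - x))
      (x + (((i : ℝ) + 1) / n) • (y - x)))) n] at h
    refine h.trans (le_of_eq ?_)
    congr 1
    refine Finset.sum_congr rfl fun i _ => ?_
    rw [hptsucc]
  -- telescoping
  have htel : (∑ i ∈ Finset.range n, 2 * ⟪b (pt (i + 1)) - b (pt i), y - x⟫) =
      2 * ⟪b y - b x, y - x⟫ := by
    have heach : ∀ i : ℕ, 2 * ⟪b (pt (i + 1)) - b (pt i), y - x⟫ =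
        (fun j => 2 * ⟪b (pt j), y - x⟫) (i + 1) - (fun j => 2 * ⟪b (pt j), y - x⟫) i := by
      intro i
      simp only [inner_sub_left]
      ring
    rw [Finset.sum_congr rfl fun i _ => heach i,
      Finset.sum_range_sub (fun j => 2 * ⟪b (pt j), y - x⟫)]
    rw [hpt0, hptn, inner_sub_left]
    ring
  -- rewrite inner along step
  have hinner : ∀ i : ℕ, 2 * ⟪b (pt (i + 1)) - b (pt i), y - x⟫ =
      (n : ℝ) * (2 * ⟪b (pt (i + 1)) - b (pt i), pt (i + 1) - pt i⟫) := by
    intro i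
    rw [hdiff, real_inner_smul_right]
    field_simp
  -- assemble
  have main : 2 * ⟪b y - b x, y - x⟫ + Matrix.trace (A x y) + μ * matOpNorm (A x y) ≤
      (n : ℝ) * ∑ i ∈ Finset.range n,
        (2 * ⟪b (pt (i + 1)) - b (pt i), pt (i + 1) - pt i⟫ +
          Matrix.trace (A (pt i) (pt (i + 1))) + μ * matOpNorm (A (pt i) (pt (i + 1)))) := by
    have hinnersum : 2 * ⟪b y - b x, y - x⟫ =
        (n : ℝ) * ∑ i ∈ Finset.range n,
          2 * ⟪b (pt (i + 1)) - b (pt i), pt (i + 1) - pt i⟫ := by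
      rw [← htel, Finset.mul_sum]
      exact Finset.sum_congr rfl fun i _ => hinner i
    have := add_le_add (add_le_add (le_of_eq hinnersum) hTr)
      (mul_le_mul_of_nonneg_left hNm hμ)
    refine this.trans (le_of_eq ?_)
    simp only [Finset.mul_sum, ← Finset.sum_add_distrib]
    refine Finset.sum_congr rfl fun i _ => ?_
    ring
  refine main.trans ?_
  have hsum : ∑ i ∈ Finset.range n,
      (2 * ⟪b (pt (i + 1)) - b (pt i), pt (i + 1) - pt i⟫ +
        Matrix.trace (A (pt i) (pt (i + 1))) + μ * matOpNorm (A (pt i) (pt (i + 1)))) ≤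
      ∑ _i ∈ Finset.range n, C * (‖y - x‖ / n) ^ 2 :=
    Finset.sum_le_sum fun i hi => step i (Finset.mem_range.1 hi)
  calc (n : ℝ) * ∑ i ∈ Finset.range n,
      (2 * ⟪b (pt (i + 1)) - b (pt i), pt (i + 1) - pt i⟫ +
        Matrix.trace (A (pt i) (pt (i + 1))) + μ * matOpNorm (A (pt i) (pt (i + 1)))) ≤
      (n : ℝ) * ∑ _i ∈ Finset.range n, C * (‖y - x‖ / n) ^ 2 :=
        mul_le_mul_of_nonneg_left hsum (le_of_lt hnpos)
    _ = C * ‖y - x‖ ^ 2 := by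
        rw [Finset.sum_const, Finset.card_range, nsmul_eq_mul]
        field_simp
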